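/- arXiv:1807.10514 — 2 statements merged into one kernel-verified Lean document; each statement's English description precedes it below -/
import Mathlib

section
/- For every u ∈ ℝ^V the subdifferential ∂J(u) of the graph total variation is an invariant φ-minimal subset of ℝ^V: for every a ∈ ℝ^V there exists x_a ∈ ∂J(u) such that Σ_{v∈V} φ(x_a(v) − a(v)) ≤ Σ_{v∈V} φ(x(v) − a(v)) for every x ∈ ∂J(u) and every convex function φ : ℝ → ℝ. -/
open Finset MeasureTheory

noncomputable section

/-- The graph total variation `J(u) = ∑_{(v,w) ∈ E} |u(w) - u(v)|`. -/
def tvJ {V : Type*} (E : Finset (V × V)) (u : V → ℝ) : ℝ :=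
  ∑ e ∈ E, |u e.2 - u e.1|

/-- The subdifferential of the graph total variation at `u`. -/
def subdiffJ {V : Type*} [Fintype V] (E : Finset (V × V)) (u : V → ℝ) : Set (V → ℝ) :=
  {us | ∀ h : V → ℝ, (∑ v, (h v - u v) * us v) + tvJ E u ≤ tvJ E h}

/-- The divergence of an edge function `H`:
`(div H)(v) = ∑_{(w,v) ∈ E} H((w,v)) - ∑_{(v,w) ∈ E} H((v,w))`. -/
def gdiv {V : Type*} [DecidableEq V] (E : Finset (V × V)) (H : V × V → ℝ) : V → ℝ :=
  fun v => (∑ e ∈ E, if e.2 = v then H e else 0) - (∑ e ∈ E, if e.1 = v then H e else 0)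

/-- The ℓ² norm on `ℝ^V`. -/
def norm2 {V : Type*} [Fintype V] (u : V → ℝ) : ℝ :=
  Real.sqrt (∑ v, (u v) ^ 2)

/-- `u` minimizes `w ↦ ½‖f - w‖₂² + α J(w)` over `ℝ^V`. -/
def IsROFMinimizer {V : Type*} [Fintype V] (E : Finset (V × V)) (f : V → ℝ) (α : ℝ)
    (u : V → ℝ) : Prop :=
  ∀ w : V → ℝ,
    (1 / 2) * (∑ v, (f v - u v) ^ 2) + α * tvJ E u ≤
      (1 / 2) * (∑ v, (f v - w v) ^ 2) + α * tvJ E w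

/-- `u : [0,∞) → ℝ^V` is a TV flow solution with datum `f`: it is Lipschitz on `[0,∞)`,
`u(0) = f`, and `-u'(t) ∈ ∂J(u(t))` for almost every `t > 0`. -/
def IsTVFlowSolution {V : Type*} [Fintype V] (E : Finset (V × V)) (f : V → ℝ)
    (u : ℝ → V → ℝ) : Prop :=
  u 0 = f ∧ (∃ L : NNReal, LipschitzOnWith L u (Set.Ici 0)) ∧
    ∃ u' : ℝ → V → ℝ, ∀ᵐ t ∂(volume : Measure ℝ), 0 < t →
      HasDerivAt u (u' t) t ∧ (fun v => -(u' t v)) ∈ subdiffJ E (u t)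


set_option linter.unusedSectionVars false
set_option maxHeartbeats 1000000

section AuxTV

variable {V : Type*} [Fintype V] [DecidableEq V]

lemma pairing (E : Finset (V × V)) (H : V × V → ℝ) (g : V → ℝ) :
    ∑ v, g v * gdiv E H v = ∑ e ∈ E, H e * (g e.2 - g e.1) := by
  unfold gdiv
  have h1 : ∀ (pick : V × V → V), ∑ v, g v * (∑ e ∈ E, if pick e = v then H e else 0)
      = ∑ e ∈ E, H e * g (pick e) := by
    intro pick
    simp_rw [Finset.mul_sum]
    rw [Finset.sum_comm]
    refine Finset.sum_congr rfl fun e _ => ?_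
    rw [Finset.sum_eq_single (pick e)]
    · simp [mul_comm]
    · intro b _ hb; simp [Ne.symm hb]
    · intro h; exact absurd (Finset.mem_univ _) h
  simp_rw [mul_sub]
  rw [Finset.sum_sub_distrib, h1 (fun e => e.2), h1 (fun e => e.1), ← Finset.sum_sub_distrib]

lemma gdiv_sum_zero (E : Finset (V × V)) (H : V × V → ℝ) : ∑ v, gdiv E H v = 0 := by
  have := pairing E H (fun _ => 1)
  simpa using this

lemma gdiv_update (E : Finset (V × V)) (G : V × V → ℝ) {e : V × V} (he : e ∈ E) (b : ℝ) (v : V) :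
    gdiv E (Function.update G e b) v =
      gdiv E G v + (b - G e) * ((if e.2 = v then (1:ℝ) else 0) - (if e.1 = v then (1:ℝ) else 0)) := by
  unfold gdiv
  have h1 : ∀ (pick : V × V → V), (∑ e' ∈ E, if pick e' = v then Function.update G e b e' else 0)
      = (∑ e' ∈ E, if pick e' = v then G e' else 0) + (b - G e) * (if pick e = v then (1:ℝ) else 0) := by
    intro pick
    have : ∀ e' ∈ E, (if pick e' = v then Function.update G e b e' else 0)
        = (if pick e' = v then G e' else 0) + (if e' = e then (if pick e' = v then b - G e' else 0) else 0) := by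
      intro e' _
      by_cases h : e' = e <;> by_cases h2 : pick e' = v <;>
        simp [h, h2, Function.update_apply] <;> split_ifs <;> ring
    rw [Finset.sum_congr rfl this, Finset.sum_add_distrib]
    congr 1
    rw [Finset.sum_eq_single_of_mem e he (fun b hb hne => by simp [hne])]
    by_cases h2 : pick e = v <;> simp [h2]
  rw [h1 (fun e' => e'.2), h1 (fun e' => e'.1)]
  ring

/-- The per-edge constraint set. -/
def edgeSet (E : Finset (V × V)) (u : V → ℝ) (e : V × V) : Set ℝ :=
  if e ∈ E then (if u e.2 - u e.1 = 0 then Set.Icc (-1 : ℝ) 1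
    else {(u e.2 - u e.1) / |u e.2 - u e.1|}) else {0}

/-- The constraint box for subgradient representations. -/
def Kbox (E : Finset (V × V)) (u : V → ℝ) : Set (V × V → ℝ) :=
  Set.univ.pi (edgeSet E u)

lemma Kbox_spec {E : Finset (V × V)} {u : V → ℝ} {H : V × V → ℝ} (hH : H ∈ Kbox E u)
    {e : V × V} (he : e ∈ E) : |H e| ≤ 1 ∧ H e * (u e.2 - u e.1) = |u e.2 - u e.1| := by
  have h := hH e (Set.mem_univ e)
  rw [edgeSet, if_pos he] at h
  by_cases hc : u e.2 - u e.1 = 0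
  · rw [if_pos hc] at h
    exact ⟨abs_le.mpr h, by rw [hc]; simp⟩
  · rw [if_neg hc, Set.mem_singleton_iff] at h
    rw [h]
    constructor
    · rw [abs_div, abs_abs, div_self (abs_ne_zero.mpr hc)]
    · rw [div_mul_eq_mul_div, ← abs_mul_abs_self, mul_div_assoc,
        div_self (abs_ne_zero.mpr hc), mul_one]

lemma Kbox_convex (E : Finset (V × V)) (u : V → ℝ) : Convex ℝ (Kbox E u) := by
  apply convex_pi
  intro e _
  unfold edgeSet
  split_ifs
  · exact convex_Icc _ _
  · exact convex_singleton _
  · exact convex_singleton _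

lemma Kbox_compact (E : Finset (V × V)) (u : V → ℝ) : IsCompact (Kbox E u) := by
  apply isCompact_univ_pi
  intro e
  unfold edgeSet
  split_ifs
  · exact isCompact_Icc
  · exact isCompact_singleton
  · exact isCompact_singleton

lemma Kbox_nonempty (E : Finset (V × V)) (u : V → ℝ) : (Kbox E u).Nonempty := by
  refine ⟨fun e => if e ∈ E then (if u e.2 - u e.1 = 0 then 0
    else (u e.2 - u e.1) / |u e.2 - u e.1|) else 0, fun e _ => ?_⟩
  unfold edgeSet
  split_ifs with h1 h2 <;> simp_all

/-- Forward inclusion: divergences of admissible edge fields are subgradients. -/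
lemma div_subset_subdiff (E : Finset (V × V)) (u : V → ℝ) :
    gdiv E '' Kbox E u ⊆ subdiffJ E u := by
  rintro p ⟨H, hH, rfl⟩
  intro h
  have hb : ∀ e ∈ E, |H e| ≤ 1 ∧ H e * (u e.2 - u e.1) = |u e.2 - u e.1| :=
    fun e he => Kbox_spec hH he
  have key := pairing E H (fun v => h v - u v)
  have h2 : ∑ e ∈ E, H e * ((h e.2 - u e.2) - (h e.1 - u e.1))
      = (∑ e ∈ E, H e * (h e.2 - h e.1)) - ∑ e ∈ E, H e * (u e.2 - u e.1) := by
    rw [← Finset.sum_sub_distrib]; exact Finset.sum_congr rfl fun e _ => by ring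
  have h3 : ∑ e ∈ E, H e * (u e.2 - u e.1) = tvJ E u := by
    rw [tvJ]; exact Finset.sum_congr rfl fun e he => (hb e he).2
  have h4 : ∑ e ∈ E, H e * (h e.2 - h e.1) ≤ tvJ E h := by
    rw [tvJ]
    refine Finset.sum_le_sum fun e he => ?_
    calc H e * (h e.2 - h e.1) ≤ |H e * (h e.2 - h e.1)| := le_abs_self _
      _ = |H e| * |h e.2 - h e.1| := abs_mul _ _
      _ ≤ 1 * |h e.2 - h e.1| := mul_le_mul_of_nonneg_right (hb e he).1 (abs_nonneg _)
      _ = |h e.2 - h e.1| := one_mul _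
  rw [key] at *
  linarith [h2, h3, h4]

lemma abs_add_eps (c d ε : ℝ) (hε : 0 < ε) (h : c ≠ 0 → ε * |d| ≤ |c|) :
    |c + ε * d| = |c| + ε * (if c = 0 then |d| else c / |c| * d) := by
  by_cases hc : c = 0
  · simp [hc, abs_mul, abs_of_pos hε]
  · rw [if_neg hc]
    rcases lt_or_gt_of_ne hc with hneg | hpos
    · have habs : |c| = -c := abs_of_neg hneg
      have h1 : c + ε * d ≤ 0 := by nlinarith [le_abs_self d, h hc]
      rw [abs_of_nonpos h1, habs]
      have : c / -c = -1 := by rw [div_neg, div_self hc]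
      rw [this]; ring
    · have habs : |c| = c := abs_of_pos hpos
      have h1 : 0 ≤ c + ε * d := by nlinarith [neg_abs_le d, h hc]
      rw [abs_of_nonneg h1, habs, div_self hc]; ring

lemma subdiff_pair_bound (E : Finset (V × V)) (u : V → ℝ) {p : V → ℝ}
    (hp : p ∈ subdiffJ E u) (g : V → ℝ) :
    ∑ v, g v * p v ≤ ∑ e ∈ E, (if u e.2 - u e.1 = 0 then |g e.2 - g e.1|
      else (u e.2 - u e.1) / |u e.2 - u e.1| * (g e.2 - g e.1)) := by
  classical
  obtain ⟨ε, hε, hprop⟩ : ∃ ε : ℝ, 0 < ε ∧ ∀ e ∈ E, u e.2 - u e.1 ≠ 0 →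
      ε * |g e.2 - g e.1| ≤ |u e.2 - u e.1| := by
    set F := E.filter (fun e => ¬(u e.2 - u e.1 = 0)) with hF
    by_cases hFne : F.Nonempty
    · refine ⟨min 1 (F.inf' hFne (fun e => |u e.2 - u e.1| / (|g e.2 - g e.1| + 1))), ?_, ?_⟩
      · refine lt_min one_pos ?_
        rw [Finset.lt_inf'_iff]
        intro e heF
        have hc : u e.2 - u e.1 ≠ 0 := (Finset.mem_filter.mp heF).2
        positivity
      · intro e heE hc
        have heF : e ∈ F := Finset.mem_filter.mpr ⟨heE, hc⟩
        have h1 : min 1 (F.inf' hFne (fun e => |u e.2 - u e.1| / (|g e.2 - g e.1| + 1)))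
            ≤ |u e.2 - u e.1| / (|g e.2 - g e.1| + 1) :=
          (min_le_right _ _).trans (Finset.inf'_le _ heF)
        have h2 : 0 < |g e.2 - g e.1| + 1 := by positivity
        rw [le_div_iff₀ h2] at h1
        have hm : (0:ℝ) ≤ min 1 (F.inf' hFne (fun e => |u e.2 - u e.1| / (|g e.2 - g e.1| + 1))) := by
          refine le_min zero_le_one (Finset.le_inf' _ _ fun e' heF' => ?_)
          have hc' : u e'.2 - u e'.1 ≠ 0 := (Finset.mem_filter.mp heF').2
          positivity
        nlinarith [abs_nonneg (g e.2 - g e.1)]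
    · refine ⟨1, one_pos, fun e heE hc => absurd ⟨e, Finset.mem_filter.mpr ⟨heE, hc⟩⟩ hFne⟩
  have hsub := hp (fun v => u v + ε * g v)
  have hL : ∑ v, ((u v + ε * g v) - u v) * p v = ε * ∑ v, g v * p v := by
    rw [Finset.mul_sum]; exact Finset.sum_congr rfl fun v _ => by ring
  have hR : tvJ E (fun v => u v + ε * g v) = tvJ E u + ε * ∑ e ∈ E, (if u e.2 - u e.1 = 0
      then |g e.2 - g e.1| else (u e.2 - u e.1) / |u e.2 - u e.1| * (g e.2 - g e.1)) := by
    unfold tvJ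
    rw [Finset.mul_sum, ← Finset.sum_add_distrib]
    refine Finset.sum_congr rfl fun e he => ?_
    have : (u e.2 + ε * g e.2) - (u e.1 + ε * g e.1)
        = (u e.2 - u e.1) + ε * (g e.2 - g e.1) := by ring
    rw [this, abs_add_eps _ _ _ hε (hprop e he)]
  rw [hL, hR] at hsub
  have := le_of_add_le_add_right (by linarith : ε * ∑ v, g v * p v + tvJ E u ≤
    ε * (∑ e ∈ E, (if u e.2 - u e.1 = 0 then |g e.2 - g e.1|
      else (u e.2 - u e.1) / |u e.2 - u e.1| * (g e.2 - g e.1))) + tvJ E u)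
  exact le_of_mul_le_mul_left this hε

lemma gdiv_linear (E : Finset (V × V)) : IsLinearMap ℝ (gdiv (V := V) E) := by
  constructor
  · intro H G
    funext v
    show _ = gdiv E H v + gdiv E G v
    unfold gdiv
    have h1 : ∀ e ∈ E, (if e.2 = v then (H + G) e else 0) = (if e.2 = v then H e else 0) + (if e.2 = v then G e else 0) := by
      intro e _; split_ifs <;> simp
    have h2 : ∀ e ∈ E, (if e.1 = v then (H + G) e else 0) = (if e.1 = v then H e else 0) + (if e.1 = v then G e else 0) := by
      intro e _; split_ifs <;> simp
    rw [Finset.sum_congr rfl h1, Finset.sum_congr rfl h2, Finset.sum_add_distrib, Finset.sum_add_distrib]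
    ring
  · intro c H
    funext v
    show _ = c * gdiv E H v
    unfold gdiv
    have h1 : ∀ e ∈ E, (if e.2 = v then (c • H) e else 0) = c * (if e.2 = v then H e else 0) := by
      intro e _; split_ifs <;> simp
    have h2 : ∀ e ∈ E, (if e.1 = v then (c • H) e else 0) = c * (if e.1 = v then H e else 0) := by
      intro e _; split_ifs <;> simp
    rw [Finset.sum_congr rfl h1, Finset.sum_congr rfl h2, ← Finset.mul_sum, ← Finset.mul_sum]
    ring

lemma gdiv_continuous (E : Finset (V × V)) : Continuous (gdiv (V := V) E) := by
  apply continuous_pi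
  intro v
  apply Continuous.sub
  all_goals
    apply continuous_finset_sum
    intro e _
    split_ifs
    · exact continuous_apply e
    · exact continuous_const

/-- Reverse inclusion: every subgradient is the divergence of an admissible edge field. -/
lemma subdiff_subset_div (E : Finset (V × V)) (u : V → ℝ) :
    subdiffJ E u ⊆ gdiv E '' Kbox E u := by
  intro p hp
  by_contra hnot
  have hDconv : Convex ℝ (gdiv E '' Kbox E u) :=
    (Kbox_convex E u).is_linear_image (gdiv_linear E)
  have hDclosed : IsClosed (gdiv E '' Kbox E u) :=
    ((Kbox_compact E u).image (gdiv_continuous E)).isClosed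
  obtain ⟨f, r, hfD, hfp⟩ := geometric_hahn_banach_closed_point hDconv hDclosed hnot
  set g : V → ℝ := fun v => f (fun j => if v = j then (1:ℝ) else 0) with hg
  have hfrep : ∀ q : V → ℝ, f q = ∑ v, q v * g v := by
    intro q
    conv_lhs => rw [pi_eq_sum_univ q]
    rw [map_sum]
    exact Finset.sum_congr rfl fun v _ => by rw [f.map_smul]; simp [hg, smul_eq_mul]
  set Hs : V × V → ℝ := fun e => if e ∈ E then (if u e.2 - u e.1 = 0 then
      (if g e.2 - g e.1 = 0 then 0 else (g e.2 - g e.1) / |g e.2 - g e.1|)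
      else (u e.2 - u e.1) / |u e.2 - u e.1|) else 0 with hHs
  have hsgn : ∀ c : ℝ, c ≠ 0 → abs (c / abs c) = 1 := by
    intro c hc; rw [abs_div, abs_abs, div_self (abs_ne_zero.mpr hc)]
  have hsgnmul : ∀ c : ℝ, c / |c| * c = |c| := by
    intro c
    by_cases hc : c = 0
    · simp [hc]
    · rw [div_mul_eq_mul_div, ← abs_mul_abs_self, mul_div_assoc, div_self (abs_ne_zero.mpr hc), mul_one]
  have hHsK : Hs ∈ Kbox E u := by
    intro e _
    rw [edgeSet]
    by_cases he : e ∈ E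
    · rw [if_pos he]
      by_cases hc : u e.2 - u e.1 = 0
      · rw [if_pos hc]
        simp only [hHs, if_pos he, if_pos hc]
        by_cases hd : g e.2 - g e.1 = 0
        · rw [if_pos hd]; constructor <;> norm_num
        · rw [if_neg hd]
          exact abs_le.mp (le_of_eq (hsgn _ hd))
      · rw [if_neg hc]
        simp only [hHs, if_pos he, if_neg hc]
        rfl
    · rw [if_neg he]
      simp [hHs, he]
  have hpair : f (gdiv E Hs) = ∑ e ∈ E, (if u e.2 - u e.1 = 0 then |g e.2 - g e.1|
      else (u e.2 - u e.1) / |u e.2 - u e.1| * (g e.2 - g e.1)) := by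
    rw [hfrep]
    have : ∑ v, gdiv E Hs v * g v = ∑ v, g v * gdiv E Hs v :=
      Finset.sum_congr rfl fun v _ => mul_comm _ _
    rw [this, pairing]
    refine Finset.sum_congr rfl fun e he => ?_
    by_cases hc : u e.2 - u e.1 = 0
    · rw [if_pos hc]
      simp only [hHs, if_pos he, if_pos hc]
      by_cases hd : g e.2 - g e.1 = 0
      · rw [if_pos hd, hd]; simp
      · rw [if_neg hd, hsgnmul]
    · rw [if_neg hc]
      simp only [hHs, if_pos he, if_neg hc]
  have hbound : f p ≤ ∑ e ∈ E, (if u e.2 - u e.1 = 0 then |g e.2 - g e.1|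
      else (u e.2 - u e.1) / |u e.2 - u e.1| * (g e.2 - g e.1)) := by
    rw [hfrep]
    calc ∑ v, p v * g v = ∑ v, g v * p v := Finset.sum_congr rfl fun v _ => mul_comm _ _
      _ ≤ _ := subdiff_pair_bound E u hp g
  have h1 : f (gdiv E Hs) < r := hfD _ ⟨Hs, hHsK, rfl⟩
  rw [hpair] at h1
  linarith [hbound, hfp]

/-- Sum of squares after perturbing two coordinates. -/
lemma Fdiff (x a : V → ℝ) (i j : V) (hij : i ≠ j) (δ : ℝ) (x' : V → ℝ)
    (h1 : x' i = x i - δ) (h2 : x' j = x j + δ) (h3 : ∀ v, v ≠ i → v ≠ j → x' v = x v) :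
    ∑ v, (x' v - a v)^2 = (∑ v, (x v - a v)^2) + 2*δ*(δ + (x j - a j) - (x i - a i)) := by
  classical
  have key : ∀ y : V → ℝ, ∑ v, (y v - a v)^2
      = (∑ v ∈ ({i, j} : Finset V)ᶜ, (y v - a v)^2) + ((y i - a i)^2 + (y j - a j)^2) := by
    intro y
    rw [← Finset.sum_compl_add_sum ({i, j} : Finset V)]
    congr 1
    rw [Finset.sum_pair hij]
  rw [key x', key x]
  have hc : ∑ v ∈ ({i, j} : Finset V)ᶜ, (x' v - a v)^2 = ∑ v ∈ ({i, j} : Finset V)ᶜ, (x v - a v)^2 := by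
    refine Finset.sum_congr rfl fun v hv => ?_
    rw [Finset.mem_compl, Finset.mem_insert, Finset.mem_singleton] at hv
    push_neg at hv
    rw [h3 v hv.1 hv.2]
  rw [hc, h1, h2]
  ring

/-- Key variational lemma: the ℓ²-projection minimizes mass on its strict upper level sets. -/
lemma level_min (E : Finset (V × V)) (u : V → ℝ)
    (hE : ∀ v w : V, (v, w) ∈ E → (w, v) ∉ E) (a : V → ℝ)
    {G : V × V → ℝ} (hG : G ∈ Kbox E u)
    (hmin : ∀ y ∈ gdiv E '' Kbox E u, ∑ v, (gdiv E G v - a v)^2 ≤ ∑ v, (y v - a v)^2)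
    {H : V × V → ℝ} (hH : H ∈ Kbox E u) (t : ℝ) :
    0 ≤ ∑ v, if t < gdiv E G v - a v then (gdiv E H v - gdiv E G v) else 0 := by
  classical
  by_contra hneg
  push_neg at hneg
  set x := gdiv E G with hx
  set gS : V → ℝ := fun v => if t < x v - a v then 1 else 0 with hgS
  have hrw : ∑ v, (if t < x v - a v then (gdiv E H v - x v) else 0)
      = ∑ e ∈ E, (H e - G e) * (gS e.2 - gS e.1) := by
    have e1 : ∑ v, (if t < x v - a v then (gdiv E H v - x v) else 0)
        = (∑ v, gS v * gdiv E H v) - ∑ v, gS v * gdiv E G v := by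
      rw [← Finset.sum_sub_distrib]
      refine Finset.sum_congr rfl fun v _ => ?_
      simp only [hgS]
      split_ifs <;> ring
    rw [e1, pairing, pairing, ← Finset.sum_sub_distrib]
    exact Finset.sum_congr rfl fun e _ => by ring
  rw [hrw] at hneg
  obtain ⟨e, heE, hlt⟩ : ∃ e ∈ E, (H e - G e) * (gS e.2 - gS e.1) < 0 := by
    by_contra hc
    push_neg at hc
    exact absurd (Finset.sum_nonneg hc) (not_le.mpr hneg)
  have hne : e.1 ≠ e.2 := by
    intro h
    have h1 : (e.1, e.2) ∈ E := by rwa [Prod.mk.eta]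
    have h2 : (e.2, e.1) ∈ E := by rw [← h] at h1 ⊢; exact h1
    exact hE e.1 e.2 h1 h2
  have hHG : H e ≠ G e := by
    intro h
    rw [h] at hlt
    simp at hlt
  have hcz : u e.2 - u e.1 = 0 := by
    by_contra hcc
    have h1 := hG e (Set.mem_univ e)
    have h2 := hH e (Set.mem_univ e)
    rw [edgeSet, if_pos heE, if_neg hcc, Set.mem_singleton_iff] at h1 h2
    exact hHG (h2.trans h1.symm)
  have hGe : G e ∈ Set.Icc (-1:ℝ) 1 := by
    have h1 := hG e (Set.mem_univ e)
    rwa [edgeSet, if_pos heE, if_pos hcz] at h1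
  have hHe : H e ∈ Set.Icc (-1:ℝ) 1 := by
    have h1 := hH e (Set.mem_univ e)
    rwa [edgeSet, if_pos heE, if_pos hcz] at h1
  have hgsv : ∀ v, gS v = 0 ∨ gS v = 1 := fun v => by
    simp only [hgS]; split_ifs <;> simp
  -- a common contradiction builder
  have key : ∀ b : ℝ, b ∈ Set.Icc (-1:ℝ) 1 →
      ∀ i j : V, (i = e.1 ∧ j = e.2 ∧ 0 < b - G e) ∨ (i = e.2 ∧ j = e.1 ∧ b - G e < 0) →
      2 * |b - G e| ≤ (x i - a i) - (x j - a j) → False := by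
    intro b hb i j hcase hgap
    set δ := |b - G e| with hδdef
    have hδpos : 0 < δ := by
      rcases hcase with ⟨_, _, h⟩ | ⟨_, _, h⟩
      · rw [hδdef]; exact abs_pos.mpr (ne_of_gt h)
      · rw [hδdef]; exact abs_pos.mpr (ne_of_lt h)
    set G' := Function.update G e b with hG'
    have hG'K : G' ∈ Kbox E u := by
      intro e' _
      by_cases he' : e' = e
      · rw [he']
        rw [edgeSet, if_pos heE, if_pos hcz]
        simpa only [hG', Function.update_self] using hb
      · rw [hG', Function.update_of_ne he']
        exact hG e' (Set.mem_univ e')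
    have hij : i ≠ j := by
      rcases hcase with ⟨hi, hj, _⟩ | ⟨hi, hj, _⟩
      · rw [hi, hj]; exact hne
      · rw [hi, hj]; exact Ne.symm hne
    have hx'i : gdiv E G' i = x i - δ := by
      rcases hcase with ⟨hi, _, hpos⟩ | ⟨hi, _, hneg2⟩
      · rw [hi, hG', gdiv_update E G heE b, if_neg (Ne.symm hne), if_pos rfl,
          hδdef, abs_of_pos hpos]
        ring
      · rw [hi, hG', gdiv_update E G heE b, if_pos rfl, if_neg hne,
          hδdef, abs_of_neg hneg2]
        ring
    have hx'j : gdiv E G' j = x j + δ := by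
      rcases hcase with ⟨_, hj, hpos⟩ | ⟨_, hj, hneg2⟩
      · rw [hj, hG', gdiv_update E G heE b, if_pos rfl, if_neg hne,
          hδdef, abs_of_pos hpos]
        ring
      · rw [hj, hG', gdiv_update E G heE b, if_neg (Ne.symm hne), if_pos rfl,
          hδdef, abs_of_neg hneg2]
        ring
    have hx'o : ∀ v, v ≠ i → v ≠ j → gdiv E G' v = x v := by
      intro v hv1 hv2
      have hvE : v ≠ e.1 ∧ v ≠ e.2 := by
        rcases hcase with ⟨hi, hj, _⟩ | ⟨hi, hj, _⟩
        · exact ⟨hi ▸ hv1, hj ▸ hv2⟩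
        · exact ⟨hj ▸ hv2, hi ▸ hv1⟩
      rw [hG', gdiv_update E G heE b, if_neg (Ne.symm hvE.2), if_neg (Ne.symm hvE.1)]
      ring
    have hF := Fdiff x a i j hij δ (gdiv E G') hx'i hx'j hx'o
    have hle := hmin (gdiv E G') ⟨G', hG'K, rfl⟩
    rw [hF] at hle
    nlinarith [hδpos, hgap, hle]
  -- trichotomy on the indicator difference
  rcases lt_trichotomy (gS e.2 - gS e.1) 0 with hs | hs | hs
  · -- e.1 in the level set, e.2 not; H e > G e
    have h1 : gS e.1 = 1 ∧ gS e.2 = 0 := by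
      rcases hgsv e.1 with h1 | h1 <;> rcases hgsv e.2 with h2 | h2 <;>
        rw [h1, h2] at hs <;> norm_num at hs <;> exact ⟨h1, h2⟩
    have hP1 : t < x e.1 - a e.1 := by
      by_contra hp
      have := h1.1
      rw [hgS] at this
      simp only [if_neg hp] at this
      norm_num at this
    have hP2 : ¬ t < x e.2 - a e.2 := by
      intro hp
      have := h1.2
      rw [hgS] at this
      simp only [if_pos hp] at this
      norm_num at this
    push_neg at hP2
    have hHGpos : 0 < H e - G e := by nlinarith [hlt, hs]
    set gap := (x e.1 - a e.1) - (x e.2 - a e.2) with hgap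
    have hgappos : 0 < gap := by rw [hgap]; linarith
    set m := min (H e - G e) (gap / 2) with hm
    have hmpos : 0 < m := lt_min hHGpos (by linarith)
    refine key (G e + m) ⟨?_, ?_⟩ e.1 e.2 (Or.inl ⟨rfl, rfl, by linarith⟩) ?_
    · have := hGe.1; linarith
    · have h2 : m ≤ H e - G e := min_le_left _ _
      have := hHe.2; linarith
    · have h3 : G e + m - G e = m := by ring
      rw [h3, abs_of_pos hmpos]
      have : m ≤ gap / 2 := min_le_right _ _
      linarith
  · rw [hs, mul_zero] at hlt
    exact lt_irrefl 0 hlt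
  · -- e.2 in the level set, e.1 not; H e < G e
    have h1 : gS e.2 = 1 ∧ gS e.1 = 0 := by
      rcases hgsv e.1 with h1 | h1 <;> rcases hgsv e.2 with h2 | h2 <;>
        rw [h1, h2] at hs <;> norm_num at hs <;> exact ⟨h2, h1⟩
    have hP2 : t < x e.2 - a e.2 := by
      by_contra hp
      have := h1.1
      rw [hgS] at this
      simp only [if_neg hp] at this
      norm_num at this
    have hP1 : ¬ t < x e.1 - a e.1 := by
      intro hp
      have := h1.2
      rw [hgS] at this
      simp only [if_pos hp] at this
      norm_num at this
    push_neg at hP1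
    have hHGneg : H e - G e < 0 := by nlinarith [hlt, hs]
    set gap := (x e.2 - a e.2) - (x e.1 - a e.1) with hgap
    have hgappos : 0 < gap := by rw [hgap]; linarith
    set m := min (G e - H e) (gap / 2) with hm
    have hmpos : 0 < m := lt_min (by linarith) (by linarith)
    refine key (G e - m) ⟨?_, ?_⟩ e.2 e.1 (Or.inr ⟨rfl, rfl, by linarith⟩) ?_
    · have h2 : m ≤ G e - H e := min_le_left _ _
      have := hHe.1; linarith
    · have := hGe.2; linarith
    · have h3 : G e - m - G e = -m := by ring
      rw [h3, abs_neg, abs_of_pos hmpos]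
      have : m ≤ gap / 2 := min_le_right _ _
      linarith

/-- Abel-type lemma: nonnegative comonotone weights against level-dominating increments. -/
lemma abel_aux (z dd : V → ℝ) :
    ∀ (A : Finset V) (c : V → ℝ), (∀ v w : V, z v ≤ z w → c v ≤ c w) →
      (∀ v ∈ A, 0 ≤ c v) →
      (∀ t : ℝ, 0 ≤ ∑ v ∈ A, if t < z v then dd v else 0) →
      0 ≤ ∑ v ∈ A, c v * dd v := by
  intro A
  induction A using Finset.strongInduction with
  | _ A ih =>
    intro c hmono hc0 hlev
    rcases A.eq_empty_or_nonempty with rfl | hAne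
    · simp
    obtain ⟨v0, hv0A, hv0min⟩ := A.exists_min_image z hAne
    set A' := A.filter (fun v => z v0 < z v) with hA'
    have hA'ss : A' ⊂ A := by
      refine Finset.filter_ssubset.mpr ⟨v0, hv0A, by simp⟩
    have hsplit : ∑ v ∈ A, c v * dd v
        = (∑ v ∈ A, (c v - c v0) * dd v) + c v0 * ∑ v ∈ A, dd v := by
      rw [Finset.mul_sum, ← Finset.sum_add_distrib]
      exact Finset.sum_congr rfl fun v _ => by ring
    have hAdd : 0 ≤ ∑ v ∈ A, dd v := by
      have := hlev (z v0 - 1)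
      have heq : ∑ v ∈ A, (if z v0 - 1 < z v then dd v else 0) = ∑ v ∈ A, dd v := by
        refine Finset.sum_congr rfl fun v hv => ?_
        rw [if_pos (by linarith [hv0min v hv])]
      linarith [heq ▸ this]
    have hmove : ∑ v ∈ A, (c v - c v0) * dd v = ∑ v ∈ A', (c v - c v0) * dd v := by
      rw [hA', Finset.sum_filter]
      refine Finset.sum_congr rfl fun v hv => ?_
      by_cases h : z v0 < z v
      · rw [if_pos h]
      · rw [if_neg h]
        push_neg at h
        have h1 : c v = c v0 := le_antisymm (hmono v v0 h) (hmono v0 v (hv0min v hv))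
        rw [h1]; ring
    have hlev' : ∀ t : ℝ, 0 ≤ ∑ v ∈ A', if t < z v then dd v else 0 := by
      intro t
      have heq : ∑ v ∈ A', (if t < z v then dd v else 0)
          = ∑ v ∈ A, if max t (z v0) < z v then dd v else 0 := by
        rw [hA', Finset.sum_filter]
        refine Finset.sum_congr rfl fun v _ => ?_
        by_cases h1 : z v0 < z v <;> by_cases h2 : t < z v <;>
          simp [h1, h2, max_lt_iff]
      rw [heq]
      exact hlev (max t (z v0))
    have hc0' : ∀ v ∈ A', 0 ≤ c v - c v0 := by
      intro v hv
      have h1 : z v0 < z v := (Finset.mem_filter.mp hv).2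
      linarith [hmono v0 v h1.le]
    have hmono' : ∀ v w : V, z v ≤ z w → c v - c v0 ≤ c w - c v0 := by
      intro v w h; linarith [hmono v w h]
    have hrec := ih A' hA'ss (fun v => c v - c v0) hmono' hc0' hlev'
    rw [hsplit, hmove]
    have := hc0 v0 hv0A
    nlinarith [hAdd, hrec]

lemma abel_full [Nonempty V] (z dd c : V → ℝ) (hmono : ∀ v w : V, z v ≤ z w → c v ≤ c w)
    (hsum : ∑ v, dd v = 0) (hlev : ∀ t : ℝ, 0 ≤ ∑ v, if t < z v then dd v else 0) :
    0 ≤ ∑ v, c v * dd v := by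
  obtain ⟨v0, _, hv0min⟩ := Finset.univ.exists_min_image z Finset.univ_nonempty
  have hsplit : ∑ v, c v * dd v
      = (∑ v, (c v - c v0) * dd v) + c v0 * ∑ v, dd v := by
    rw [Finset.mul_sum, ← Finset.sum_add_distrib]
    exact Finset.sum_congr rfl fun v _ => by ring
  rw [hsplit, hsum, mul_zero, add_zero]
  exact abel_aux z dd Finset.univ (fun v => c v - c v0)
    (fun v w h => by simpa using sub_le_sub_right (hmono v w h) (c v0))
    (fun v _ => by simpa using sub_nonneg.mpr (hmono v0 v (hv0min v (Finset.mem_univ v))))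
    hlev

end AuxTV

/-- A monotone subgradient selection for a convex function on ℝ. -/
lemma convex_subgrad (φ : ℝ → ℝ) (hφ : ConvexOn ℝ Set.univ φ) :
    ∃ ψ : ℝ → ℝ, (∀ s t : ℝ, s ≤ t → ψ s ≤ ψ t) ∧
      (∀ s t : ℝ, φ t + ψ t * (s - t) ≤ φ s) := by
  set ψ : ℝ → ℝ := fun t => sSup ((fun r => (φ t - φ r) / (t - r)) '' Set.Iio t) with hψ
  have hslope : ∀ r t s : ℝ, r < t → t < s → (φ t - φ r) / (t - r) ≤ (φ s - φ t) / (s - t) :=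
    fun r t s h1 h2 => hφ.slope_mono_adjacent (Set.mem_univ r) (Set.mem_univ s) h1 h2
  have hne : ∀ t : ℝ, ((fun r => (φ t - φ r) / (t - r)) '' Set.Iio t).Nonempty :=
    fun t => ⟨_, ⟨t - 1, by norm_num, rfl⟩⟩
  have hbdd : ∀ t : ℝ, BddAbove ((fun r => (φ t - φ r) / (t - r)) '' Set.Iio t) := by
    intro t
    refine ⟨(φ (t + 1) - φ t) / (t + 1 - t), ?_⟩
    rintro s ⟨r, hr, rfl⟩
    exact hslope r t (t + 1) hr (by linarith)
  have hle : ∀ t s : ℝ, t < s → ψ t ≤ (φ s - φ t) / (s - t) := by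
    intro t s hts
    refine csSup_le (hne t) ?_
    rintro q ⟨r, hr, rfl⟩
    exact hslope r t s hr hts
  have hge : ∀ r t : ℝ, r < t → (φ t - φ r) / (t - r) ≤ ψ t := by
    intro r t hrt
    exact le_csSup (hbdd t) ⟨r, hrt, rfl⟩
  refine ⟨ψ, ?_, ?_⟩
  · intro s t hst
    rcases eq_or_lt_of_le hst with rfl | h
    · exact le_refl _
    · exact (hle s t h).trans (hge s t h)
  · intro s t
    rcases lt_trichotomy s t with h | rfl | h
    · have h1 := hge s t h
      rw [div_le_iff₀ (by linarith : 0 < t - s)] at h1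
      nlinarith [h1]
    · simp
    · have h1 := hle t s h
      rw [le_div_iff₀ (by linarith : 0 < s - t)] at h1
      nlinarith [h1]

/-- for every `u ∈ ℝ^V`, the subdifferential `∂J(u)` is an invariant
φ-minimal subset of `ℝ^V`. -/
theorem subdiff_invariant_phi_minimal
    {V : Type*} [Fintype V] [DecidableEq V] [Nonempty V] (E : Finset (V × V))
    (hE : ∀ v w : V, (v, w) ∈ E → (w, v) ∉ E)
    (hconn : (SimpleGraph.fromRel (fun v w : V => (v, w) ∈ E)).Connected)
    (u : V → ℝ) :
    ∀ a : V → ℝ, ∃ xa ∈ subdiffJ E u, ∀ x ∈ subdiffJ E u,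
      ∀ φ : ℝ → ℝ, ConvexOn ℝ Set.univ φ →
        ∑ v, φ (xa v - a v) ≤ ∑ v, φ (x v - a v) := by
    classical
  intro a
  set D := gdiv E '' Kbox E u with hD
  have hDne : D.Nonempty := (Kbox_nonempty E u).image _
  have hDcp : IsCompact D := (Kbox_compact E u).image (gdiv_continuous E)
  have hFcont : Continuous (fun x : V → ℝ => ∑ v, (x v - a v)^2) :=
    continuous_finset_sum _ fun v _ => ((continuous_apply v).sub continuous_const).pow 2
  obtain ⟨xa, hxaD, hxamin⟩ := hDcp.exists_isMinOn hDne hFcont.continuousOn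
  have hmin : ∀ y ∈ D, ∑ v, (xa v - a v)^2 ≤ ∑ v, (y v - a v)^2 :=
    fun y hy => hxamin hy
  have hxaD' := hxaD
  obtain ⟨G, hG, hxaeq⟩ := hxaD'
  refine ⟨xa, div_subset_subdiff E u hxaD, ?_⟩
  intro x hx φ hφ
  obtain ⟨H, hH, hxeq⟩ := subdiff_subset_div E u hx
  obtain ⟨ψ, hψmono, hψsub⟩ := convex_subgrad φ hφ
  set z : V → ℝ := fun v => xa v - a v with hz
  set dd : V → ℝ := fun v => x v - xa v with hdd
  have hsum : ∑ v, dd v = 0 := by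
    have h1 : ∑ v, x v = 0 := by rw [← hxeq]; exact gdiv_sum_zero E H
    have h2 : ∑ v, xa v = 0 := by rw [← hxaeq]; exact gdiv_sum_zero E G
    simp only [hdd]
    rw [Finset.sum_sub_distrib, h1, h2, sub_zero]
  have hlev : ∀ t : ℝ, 0 ≤ ∑ v, if t < z v then dd v else 0 := by
    intro t
    have hmin' : ∀ y ∈ gdiv E '' Kbox E u, ∑ v, (gdiv E G v - a v)^2 ≤ ∑ v, (y v - a v)^2 := by
      rw [hxaeq]; exact hmin
    have := level_min E u hE a hG hmin' hH t
    rw [hxaeq, hxeq] at this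
    simp only [hz, hdd]
    exact this
  have habel : 0 ≤ ∑ v, ψ (z v) * dd v :=
    abel_full z dd (fun v => ψ (z v)) (fun v w h => hψmono _ _ h) hsum hlev
  have hpt : ∀ v : V, φ (z v) + ψ (z v) * dd v ≤ φ (x v - a v) := by
    intro v
    have h1 := hψsub (x v - a v) (z v)
    have h2 : (x v - a v) - z v = dd v := by simp only [hz, hdd]; ring
    rw [h2] at h1
    exact h1
  have hsum2 : ∑ v, (φ (z v) + ψ (z v) * dd v) ≤ ∑ v, φ (x v - a v) :=
    Finset.sum_le_sum fun v _ => hpt v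
  rw [Finset.sum_add_distrib] at hsum2
  have hfinal : ∑ v, φ (z v) ≤ ∑ v, φ (x v - a v) := by linarith
  simpa only [hz] using hfinal
end
end

section
/- For every f ∈ ℝ^V, α ≥ 0 and every convex function φ : ℝ → ℝ, the ROF minimizer u_α satisfies Σ_{v∈V} φ(u_α(v)) = min{ Σ_{v∈V} φ(u(v)) : u ∈ f − α∂J(0) }. -/
open Finset MeasureTheory

noncomputable section

/- ## Auxiliary lemmas -/

lemma exists_monotone_subgrad (φ : ℝ → ℝ) (hφ : ConvexOn ℝ Set.univ φ) :
    ∃ g : ℝ → ℝ, Monotone g ∧ ∀ x y : ℝ, φ x + g x * (y - x) ≤ φ y := by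
  set S : ℝ → Set ℝ := fun x => (fun z => (φ z - φ x) / (z - x)) '' Set.Ioi x with hS
  have hne : ∀ x, (S x).Nonempty := fun x => ⟨_, ⟨x + 1, by simp, rfl⟩⟩
  have hlb : ∀ x y : ℝ, y < x → (φ x - φ y) / (x - y) ∈ lowerBounds (S x) := by
    intro x y hyx
    rintro _ ⟨z, hz, rfl⟩
    exact hφ.slope_mono_adjacent (Set.mem_univ y) (Set.mem_univ z) hyx hz
  have hbdd : ∀ x, BddBelow (S x) := fun x => ⟨_, hlb x (x - 1) (by linarith)⟩
  refine ⟨fun x => sInf (S x), ?_, ?_⟩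
  · intro a b hab
    rcases eq_or_lt_of_le hab with rfl | hab
    · exact le_rfl
    · have h1 : sInf (S a) ≤ (φ b - φ a) / (b - a) :=
        csInf_le (hbdd a) ⟨b, hab, rfl⟩
      have h2 : (φ b - φ a) / (b - a) ≤ sInf (S b) := by
        apply le_csInf (hne b)
        rintro _ ⟨z, hz, rfl⟩
        exact hφ.slope_mono_adjacent (Set.mem_univ a) (Set.mem_univ z) hab hz
      linarith
  · intro x y
    rcases lt_trichotomy x y with hxy | rfl | hxy
    · have h1 : sInf (S x) ≤ (φ y - φ x) / (y - x) := csInf_le (hbdd x) ⟨y, hxy, rfl⟩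
      have h2 : sInf (S x) * (y - x) ≤ φ y - φ x := by
        calc sInf (S x) * (y - x) ≤ ((φ y - φ x) / (y - x)) * (y - x) := by
              apply mul_le_mul_of_nonneg_right h1 (by linarith)
            _ = φ y - φ x := div_mul_cancel₀ _ (by linarith)
      linarith
    · simp
    · have h1 : (φ x - φ y) / (x - y) ≤ sInf (S x) :=
        le_csInf (hne x) (hlb x y hxy)
      have h2 : φ x - φ y ≤ sInf (S x) * (x - y) := by
        calc φ x - φ y = ((φ x - φ y) / (x - y)) * (x - y) :=
              (div_mul_cancel₀ _ (by linarith : x - y ≠ 0)).symm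
          _ ≤ sInf (S x) * (x - y) := mul_le_mul_of_nonneg_right h1 (by linarith)
      nlinarith

lemma tvJ_nonneg {V : Type*} (E : Finset (V × V)) (u : V → ℝ) : 0 ≤ tvJ E u :=
  Finset.sum_nonneg fun _ _ => abs_nonneg _

lemma tvJ_zero {V : Type*} (E : Finset (V × V)) : tvJ E (0 : V → ℝ) = 0 := by
  simp [tvJ]

lemma small_t (X c : ℝ) (hc : 0 ≤ c) (h : ∀ t : ℝ, 0 < t → t ≤ 1 → X ≤ t * c) : X ≤ 0 := by
  by_contra hX
  push_neg at hX
  have ht0 : (0:ℝ) < min 1 (X / (2 * (c + 1))) := by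
    apply lt_min one_pos
    positivity
  have := h _ ht0 (min_le_left _ _)
  have h2 : min 1 (X / (2 * (c + 1))) * c ≤ (X / (2 * (c + 1))) * c :=
    mul_le_mul_of_nonneg_right (min_le_right _ _) hc
  have h3 : (X / (2 * (c + 1))) * c < X := by
    rw [div_mul_eq_mul_div, div_lt_iff₀ (by linarith)]
    nlinarith
  linarith

/-- ROF optimality gives the subgradient inequality for `pα = (f - uα)/α`. -/
lemma rof_subgrad {V : Type*} [Fintype V] (E : Finset (V × V)) (f : V → ℝ) (α : ℝ)
    (hα : 0 < α) (uα : V → ℝ) (huα : IsROFMinimizer E f α uα) (h : V → ℝ) :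
    (∑ v, (h v - uα v) * ((f v - uα v) / α)) + tvJ E uα ≤ tvJ E h := by
  set d : V → ℝ := fun v => h v - uα v with hd
  set S : ℝ := ∑ v, (f v - uα v) * d v with hSdef
  set c : ℝ := ∑ v, d v ^ 2 with hcdef
  have hc : 0 ≤ c := Finset.sum_nonneg fun _ _ => sq_nonneg _
  have key : S + α * tvJ E uα - α * tvJ E h ≤ 0 := by
    apply small_t _ (c / 2) (by linarith)
    intro t ht0 ht1
    have hmin := huα (fun v => uα v + t * d v)
    have expand : ∑ v, (f v - (uα v + t * d v)) ^ 2
        = (∑ v, (f v - uα v) ^ 2) - 2 * t * S + t ^ 2 * c := by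
      rw [hSdef, hcdef, Finset.mul_sum, Finset.mul_sum, ← Finset.sum_sub_distrib,
        ← Finset.sum_add_distrib]
      exact Finset.sum_congr rfl fun v _ => by ring
    have tvb : tvJ E (fun v => uα v + t * d v) ≤ (1 - t) * tvJ E uα + t * tvJ E h := by
      rw [tvJ, tvJ, tvJ, Finset.mul_sum, Finset.mul_sum, ← Finset.sum_add_distrib]
      apply Finset.sum_le_sum
      intro e _
      have heq : (uα e.2 + t * d e.2) - (uα e.1 + t * d e.1)
          = (1 - t) * (uα e.2 - uα e.1) + t * (h e.2 - h e.1) := by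
        simp only [hd]; ring
      rw [heq]
      calc |(1 - t) * (uα e.2 - uα e.1) + t * (h e.2 - h e.1)|
          ≤ |(1 - t) * (uα e.2 - uα e.1)| + |t * (h e.2 - h e.1)| := abs_add_le _ _
        _ = (1 - t) * |uα e.2 - uα e.1| + t * |h e.2 - h e.1| := by
            rw [abs_mul, abs_mul, abs_of_nonneg (by linarith : (0:ℝ) ≤ 1 - t),
              abs_of_nonneg ht0.le]
    rw [expand] at hmin
    nlinarith [hmin, tvb]
  have hsum : ∑ v, (h v - uα v) * ((f v - uα v) / α) = S / α := by
    rw [hSdef, Finset.sum_div]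
    exact Finset.sum_congr rfl fun v _ => by field_simp; ring
  rw [hsum]
  rw [div_add' _ _ _ hα.ne', div_le_iff₀ hα]
  nlinarith [key]

/-- If `pα ∈ ∂J(0)` attains `⟨uα, pα⟩ = J(uα)`, then for any monotone `g̃`,
`J(g̃ ∘ uα) ≤ ⟨g̃ ∘ uα, pα⟩`. -/
lemma key_ineq {V : Type*} [Fintype V] (E : Finset (V × V)) (uα pα : V → ℝ)
    (hpα0 : pα ∈ subdiffJ E (0 : V → ℝ))
    (heq : ∑ v, uα v * pα v = tvJ E uα)
    (gt : ℝ → ℝ) (hmono : Monotone gt) :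
    tvJ E (fun v => gt (uα v)) ≤ ∑ v, gt (uα v) * pα v := by
  set g : V → ℝ := fun v => gt (uα v) with hg
  set T : Finset ℝ := insert 1 (E.image fun e =>
    if g e.2 - g e.1 = 0 then 1 else |uα e.2 - uα e.1| / |g e.2 - g e.1|) with hT
  have hTne : T.Nonempty := ⟨1, mem_insert_self _ _⟩
  set s : ℝ := T.min' hTne with hs
  have hzero : ∀ e : V × V, uα e.2 - uα e.1 = 0 → g e.2 - g e.1 = 0 := by
    intro e he
    have : uα e.2 = uα e.1 := by linarith
    simp [hg, this]
  have hspos : 0 < s := by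
    rw [hs, Finset.lt_min'_iff]
    intro y hy
    rcases Finset.mem_insert.mp hy with rfl | hy
    · exact one_pos
    · obtain ⟨e, he, rfl⟩ := Finset.mem_image.mp hy
      split_ifs with hb
      · exact one_pos
      · have ha : uα e.2 - uα e.1 ≠ 0 := fun h => hb (hzero e h)
        exact div_pos (abs_pos.mpr ha) (abs_pos.mpr hb)
  have hsb : ∀ e ∈ E, s * |g e.2 - g e.1| ≤ |uα e.2 - uα e.1| := by
    intro e he
    by_cases hb : g e.2 - g e.1 = 0
    · simp [hb, abs_nonneg]
    · have hmem : |uα e.2 - uα e.1| / |g e.2 - g e.1| ∈ T := by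
        rw [hT]
        refine Finset.mem_insert_of_mem (Finset.mem_image.mpr ⟨e, he, ?_⟩)
        simp [hb]
      have hle : s ≤ |uα e.2 - uα e.1| / |g e.2 - g e.1| := Finset.min'_le _ _ hmem
      have hbpos : 0 < |g e.2 - g e.1| := abs_pos.mpr hb
      calc s * |g e.2 - g e.1| ≤ (|uα e.2 - uα e.1| / |g e.2 - g e.1|) * |g e.2 - g e.1| :=
            mul_le_mul_of_nonneg_right hle (abs_nonneg _)
        _ = |uα e.2 - uα e.1| := div_mul_cancel₀ _ hbpos.ne'
  have hedge : ∀ e ∈ E, |(uα e.2 - s * g e.2) - (uα e.1 - s * g e.1)|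
      = |uα e.2 - uα e.1| - s * |g e.2 - g e.1| := by
    intro e he
    set a : ℝ := uα e.2 - uα e.1 with hadef
    set b : ℝ := g e.2 - g e.1 with hbdef
    have hrw : (uα e.2 - s * g e.2) - (uα e.1 - s * g e.1) = a - s * b := by
      rw [hadef, hbdef]; ring
    rw [hrw]
    have hsb' : s * |b| ≤ |a| := hsb e he
    rcases lt_trichotomy a 0 with hA | hA | hA
    · have hb : b ≤ 0 := by
        simp only [hbdef, hg]
        exact sub_nonpos.mpr (hmono (show uα e.2 ≤ uα e.1 by linarith))
      rw [abs_of_nonpos hA.le, abs_of_nonpos hb] at hsb'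
      rw [abs_of_nonpos (by nlinarith : a - s * b ≤ 0), abs_of_nonpos hA.le, abs_of_nonpos hb]
      ring
    · have hb : b = 0 := hzero e hA
      simp [hA, hb]
    · have hb : 0 ≤ b := by
        simp only [hbdef, hg]
        exact sub_nonneg.mpr (hmono (show uα e.1 ≤ uα e.2 by linarith))
      rw [abs_of_pos hA, abs_of_nonneg hb] at hsb'
      rw [abs_of_nonneg (by nlinarith : 0 ≤ a - s * b), abs_of_pos hA, abs_of_nonneg hb]
  have h1 := hpα0 (fun v => uα v - s * g v)
  simp only [Pi.zero_apply, sub_zero, tvJ_zero, add_zero] at h1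
  have hL : ∑ v, (uα v - s * g v) * pα v = (∑ v, uα v * pα v) - s * ∑ v, g v * pα v := by
    rw [Finset.mul_sum, ← Finset.sum_sub_distrib]
    exact Finset.sum_congr rfl fun v _ => by ring
  have hR : tvJ E (fun v => uα v - s * g v) = tvJ E uα - s * tvJ E g := by
    rw [tvJ, tvJ, tvJ, Finset.mul_sum, ← Finset.sum_sub_distrib]
    exact Finset.sum_congr rfl fun e he => hedge e he
  rw [hL, hR, heq] at h1
  have : s * tvJ E g ≤ s * ∑ v, g v * pα v := by linarith
  exact le_of_mul_le_mul_left this hspos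

/-- the ROF minimizer `u_α` simultaneously minimizes `∑_v φ(u(v))` over
`f - α ∂J(0)` for every convex `φ : ℝ → ℝ`. -/
theorem rof_minimizer_universal_minimality
    {V : Type*} [Fintype V] [DecidableEq V] [Nonempty V] (E : Finset (V × V))
    (hE : ∀ v w : V, (v, w) ∈ E → (w, v) ∉ E)
    (hconn : (SimpleGraph.fromRel (fun v w : V => (v, w) ∈ E)).Connected)
    (f : V → ℝ) (α : ℝ) (hα : 0 ≤ α)
    (uα : V → ℝ) (huα : IsROFMinimizer E f α uα)
    (φ : ℝ → ℝ) (hφ : ConvexOn ℝ Set.univ φ) :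
    uα ∈ (fun us => f - α • us) '' subdiffJ E (0 : V → ℝ) ∧
      ∀ u ∈ (fun us => f - α • us) '' subdiffJ E (0 : V → ℝ),
        ∑ v, φ (uα v) ≤ ∑ v, φ (u v) := by
  rcases hα.lt_or_eq with hpos | hzero
  · -- case α > 0
    set pα : V → ℝ := fun v => (f v - uα v) / α with hpα
    have hsub := rof_subgrad E f α hpos uα huα
    have tvJ_add_le : ∀ x y : V → ℝ, tvJ E (fun v => x v + y v) ≤ tvJ E x + tvJ E y := by
      intro x y
      rw [tvJ, tvJ, tvJ, ← Finset.sum_add_distrib]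
      apply Finset.sum_le_sum
      intro e _
      have hrw : (x e.2 + y e.2) - (x e.1 + y e.1) = (x e.2 - x e.1) + (y e.2 - y e.1) := by
        ring
      rw [hrw]
      exact abs_add_le _ _
    have hpα0 : pα ∈ subdiffJ E (0 : V → ℝ) := by
      intro h
      have h1 := hsub (fun v => uα v + h v)
      have h2 : ∑ v, ((uα v + h v) - uα v) * pα v = ∑ v, (h v - (0 : V → ℝ) v) * pα v :=
        Finset.sum_congr rfl fun v _ => by simp
      rw [h2] at h1
      have h3 := tvJ_add_le uα h
      rw [tvJ_zero]
      linarith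
    have heq : ∑ v, uα v * pα v = tvJ E uα := by
      have h1 := hsub 0
      rw [tvJ_zero] at h1
      have e1 : ∑ v, ((0 : V → ℝ) v - uα v) * pα v = -∑ v, uα v * pα v := by
        rw [← Finset.sum_neg_distrib]
        exact Finset.sum_congr rfl fun v _ => by simp [neg_mul]
      rw [e1] at h1
      have h2 := hsub (fun v => 2 * uα v)
      have e2 : ∑ v, ((2 * uα v) - uα v) * pα v = ∑ v, uα v * pα v :=
        Finset.sum_congr rfl fun v _ => by ring
      have e3 : tvJ E (fun v => 2 * uα v) = 2 * tvJ E uα := by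
        rw [tvJ, tvJ, Finset.mul_sum]
        refine Finset.sum_congr rfl fun e _ => ?_
        rw [show (2 * uα e.2 - 2 * uα e.1) = 2 * (uα e.2 - uα e.1) by ring, abs_mul, abs_two]
      rw [e2, e3] at h2
      linarith
    have hαpα : ∀ v, α * pα v = f v - uα v := by
      intro v
      rw [hpα]
      field_simp
    constructor
    · refine ⟨pα, hpα0, ?_⟩
      funext v
      simp only [Pi.sub_apply, Pi.smul_apply, smul_eq_mul, hαpα v]
      ring
    · rintro u ⟨p, hp, rfl⟩
      obtain ⟨gt, hmono, hsubg⟩ := exists_monotone_subgrad φ hφ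
      have hkey := key_ineq E uα pα hpα0 heq gt hmono
      have hgp : ∑ v, gt (uα v) * p v ≤ tvJ E (fun v => gt (uα v)) := by
        have h1 := hp (fun v => gt (uα v))
        rw [tvJ_zero] at h1
        simpa using h1
      have hdiff : ∀ v : V, (f - α • p) v - uα v = α * (pα v - p v) := by
        intro v
        simp only [Pi.sub_apply, Pi.smul_apply, smul_eq_mul, mul_sub, hαpα v]
        ring
      have hmain : ∑ v, (φ (uα v) + gt (uα v) * ((f - α • p) v - uα v))
          ≤ ∑ v, φ ((f - α • p) v) :=
        Finset.sum_le_sum fun v _ => hsubg (uα v) ((f - α • p) v)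
      rw [Finset.sum_add_distrib] at hmain
      have hpos2 : 0 ≤ ∑ v, gt (uα v) * ((f - α • p) v - uα v) := by
        have hrw : ∑ v, gt (uα v) * ((f - α • p) v - uα v)
            = α * ((∑ v, gt (uα v) * pα v) - ∑ v, gt (uα v) * p v) := by
          rw [mul_sub, Finset.mul_sum, Finset.mul_sum, ← Finset.sum_sub_distrib]
          exact Finset.sum_congr rfl fun v _ => by rw [hdiff v]; ring
        rw [hrw]
        exact mul_nonneg hpos.le (by linarith)
      linarith
  · -- case α = 0
    subst hzero
    have hf : uα = f := by
      have h1 := huα f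
      simp only [sub_self, ne_eq, OfNat.ofNat_ne_zero, not_false_eq_true, zero_pow,
        Finset.sum_const_zero, mul_zero, zero_mul, add_zero] at h1
      have h2 : ∑ v, (f v - uα v) ^ 2 = 0 :=
        le_antisymm (by linarith) (Finset.sum_nonneg fun v _ => sq_nonneg _)
      have h3 := (Finset.sum_eq_zero_iff_of_nonneg fun v _ => sq_nonneg (f v - uα v)).mp h2
      funext v
      have h4 := h3 v (Finset.mem_univ v)
      have h5 := pow_eq_zero_iff (n := 2) (by norm_num) |>.mp h4
      linarith
    have h0mem : (0 : V → ℝ) ∈ subdiffJ E (0 : V → ℝ) := by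
      intro h
      simp only [Pi.zero_apply, mul_zero, Finset.sum_const_zero, tvJ_zero, add_zero]
      exact tvJ_nonneg E h
    constructor
    · exact ⟨0, h0mem, by simp [hf]⟩
    · rintro u ⟨p, hp, rfl⟩
      simp [hf]
end
end
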